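/- For all ε with 1 < ε < (√13 - 1)/2 and all r ≥ 0, 1 - ε² + (ε + r)·log((ε² + r)/(1 + r)) < 0. -/

import Mathlib

/-- Padé-type upper bound for the logarithm: `log (1+y) < (y²+6y)/(4y+6)` for `y > 0`. -/
lemma pade_log_bound (y : ℝ) (hy : 0 < y) :
    Real.log (1 + y) < (y ^ 2 + 6 * y) / (4 * y + 6) := by
  set f : ℝ → ℝ := fun t => (t ^ 2 + 6 * t) / (4 * t + 6) - Real.log (1 + t) with hf
  have key : StrictMonoOn f (Set.Ici 0) := by
    apply strictMonoOn_of_deriv_pos (convex_Ici 0)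
    · apply ContinuousOn.sub
      · exact ContinuousOn.div (by fun_prop) (by fun_prop)
          (fun t ht => by simp only [Set.mem_Ici] at ht; positivity)
      · exact ContinuousOn.log (by fun_prop)
          (fun t ht => by simp only [Set.mem_Ici] at ht; positivity)
    · intro t ht
      rw [interior_Ici] at ht
      have ht0 : 0 < t := ht
      have h4 : (0:ℝ) < 4 * t + 6 := by linarith
      have h1t : (0:ℝ) < 1 + t := by linarith
      have hd1 : HasDerivAt (fun t : ℝ => (t ^ 2 + 6 * t) / (4 * t + 6))
          (((2 * t + 6) * (4 * t + 6) - (t ^ 2 + 6 * t) * 4) / (4 * t + 6) ^ 2) t := by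
        have hnum : HasDerivAt (fun t : ℝ => t ^ 2 + 6 * t) (2 * t + 6) t := by
          have this : HasDerivAt (fun x : ℝ => x ^ 2 + 6 * x) ((2 : ℕ) * t ^ (2 - 1) + 6 * 1) t :=
            ((hasDerivAt_pow 2 t).add ((hasDerivAt_id t).const_mul 6))
          exact this.congr_deriv (by norm_num)
        have hden : HasDerivAt (fun t : ℝ => 4 * t + 6) 4 t := by
          have := ((hasDerivAt_id t).const_mul 4).add_const 6
          simpa using this
        exact hnum.div hden (ne_of_gt h4)
      have hd2 : HasDerivAt (fun t : ℝ => Real.log (1 + t)) (1 / (1 + t)) t := by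
        have h : HasDerivAt (fun t : ℝ => 1 + t) 1 t := by
          simpa using (hasDerivAt_id t).const_add 1
        simpa using h.log (ne_of_gt h1t)
      have hd : HasDerivAt f
          (((2 * t + 6) * (4 * t + 6) - (t ^ 2 + 6 * t) * 4) / (4 * t + 6) ^ 2 - 1 / (1 + t)) t :=
        hd1.sub hd2
      rw [hd.deriv]
      rw [div_sub_div _ _ (by positivity) (ne_of_gt h1t)]
      apply div_pos
      · nlinarith [pow_pos ht0 3]
      · positivity
  have h0 : f 0 = 0 := by simp [hf]
  have := key (Set.self_mem_Ici) (Set.mem_Ici.mpr hy.le) hy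
  rw [h0] at this
  simp only [hf] at this
  linarith

theorem M3_bound (ε r : ℝ) (hε1 : 1 < ε) (hε2 : ε < (Real.sqrt 13 - 1) / 2) (hr : 0 ≤ r) :
    1 - ε ^ 2 + (ε + r) * Real.log ((ε ^ 2 + r) / (1 + r)) < 0 := by
  have h1r : (0:ℝ) < 1 + r := by linarith
  have hεlt2 : ε < 2 := by
    have h13 : Real.sqrt 13 < 5 :=
      (Real.sqrt_lt' (by norm_num)).mpr (by norm_num)
    linarith
  set y : ℝ := (ε ^ 2 - 1) / (1 + r) with hy
  have hy0 : 0 < y := by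
    apply div_pos _ h1r
    nlinarith
  have hrw : (ε ^ 2 + r) / (1 + r) = 1 + y := by
    rw [hy, eq_comm, one_add_div (ne_of_gt h1r)]
    ring
  rw [hrw]
  have hεr : 0 < ε + r := by linarith
  have hlog := pade_log_bound y hy0
  have hmul : (ε + r) * Real.log (1 + y) < (ε + r) * ((y ^ 2 + 6 * y) / (4 * y + 6)) :=
    mul_lt_mul_of_pos_left hlog hεr
  have halg : 1 - ε ^ 2 + (ε + r) * ((y ^ 2 + 6 * y) / (4 * y + 6)) ≤ 0 := by
    have h4 : (0:ℝ) < 4 * y + 6 := by positivity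
    rw [← mul_div_assoc]
    have hyy : y * (1 + r) = ε ^ 2 - 1 := by
      rw [hy]; field_simp
    have hid : (1 + r) * ((1 + r) * (4 * y + 6) - (ε + r) * (y + 6))
        = (ε - 1) ^ 2 * (2 + 3 * r - ε) := by
      linear_combination (4 + 3 * r - ε) * hyy
    have hstep : 0 ≤ (1 + r) * (4 * y + 6) - (ε + r) * (y + 6) := by
      nlinarith [hid, sq_nonneg (ε - 1), mul_pos h1r h1r]
    have hle : (ε + r) * (y ^ 2 + 6 * y) / (4 * y + 6) ≤ ε ^ 2 - 1 := by
      rw [div_le_iff₀ h4]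
      nlinarith [mul_nonneg hy0.le hstep, hyy]
    linarith
  linarith
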